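/- arXiv:1907.02347 — 3 statements merged into one kernel-verified Lean document; each statement's English description precedes it below -/
import Mathlib

section
/- Let M be a nonempty set and N a nonempty compact topological space, and let h : M × N → ℝ be concave-convexlike, i.e. (i) for all x₁, x₂ ∈ M and α ∈ [0,1] there exists x ∈ M such that α·h(x₁,y) + (1−α)·h(x₂,y) ≤ h(x,y) for all y ∈ N, and (ii) for all y₁, y₂ ∈ N and α ∈ [0,1] there exists y ∈ N such that α·h(x,y₁) + (1−α)·h(x,y₂) ≥ h(x,y) for all x ∈ M. If y ↦ h(x,y) is lower semicontinuous on N for every x ∈ M, then sup_{x∈M} inf_{y∈N} h(x,y) = inf_{y∈N} sup_{x∈M} h(x,y) (equality in the extended reals), and the infimum on the right-hand side is attained at some y* ∈ N. -/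
open Set

section Aux

variable {M : Type*} {N : Type*}

/-- Maximum of `h x y` over `x₁ :: l`. -/
noncomputable def lmaxAux (h : M → N → ℝ) : List M → M → N → ℝ
  | [], x₁, y => h x₁ y
  | x :: l, x₁, y => max (h x y) (lmaxAux h l x₁ y)

lemma le_lmaxAux (h : M → N → ℝ) (l : List M) (x₁ : M) (y : N) :
    ∀ x ∈ x₁ :: l, h x y ≤ lmaxAux h l x₁ y := by
  induction l with
  | nil => intro x hx; simp at hx; simp [hx, lmaxAux]
  | cons a l ih =>
    intro x hx
    simp only [List.mem_cons] at hx
    rcases hx with rfl | rfl | hx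
    · exact le_trans (ih x (by simp)) (le_max_right _ _)
    · exact le_max_left _ _
    · exact le_trans (ih x (by simp [hx])) (le_max_right _ _)

lemma lmaxAux_attained (h : M → N → ℝ) (l : List M) (x₁ : M) (y : N) :
    ∃ x ∈ x₁ :: l, lmaxAux h l x₁ y = h x y := by
  induction l with
  | nil => exact ⟨x₁, by simp, rfl⟩
  | cons a l ih =>
    obtain ⟨x, hx, hx2⟩ := ih
    rcases le_total (h a y) (lmaxAux h l x₁ y) with hle | hle
    · refine ⟨x, ?_, ?_⟩
      · simp only [List.mem_cons] at hx ⊢; tauto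
      · simp only [lmaxAux]
        rw [hx2] at hle ⊢
        exact max_eq_right hle
    · exact ⟨a, by simp, by simp [lmaxAux, max_eq_left hle]⟩

/-- The core two-function lemma (Kneser's connectedness argument). No topology on `N` is
needed at this stage. -/
lemma pair_lemma {N : Type*} (f g : N → ℝ) (β₀ c : ℝ) (hβc : β₀ < c)
    (hmix : ∀ α ∈ Set.Icc (0:ℝ) 1, ∀ b : ℝ, β₀ < b → ∃ y, α * f y + (1 - α) * g y < b)
    (hcvx : ∀ y₁ y₂ : N, ∀ lam ∈ Set.Icc (0:ℝ) 1, ∃ y,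
      f y ≤ lam * f y₁ + (1 - lam) * f y₂ ∧ g y ≤ lam * g y₁ + (1 - lam) * g y₂) :
    ∃ y, f y ≤ c ∧ g y ≤ c := by
  by_contra hcon
  push_neg at hcon
  set b : ℝ := (β₀ + c) / 2 with hbdef
  have hβb : β₀ < b := by rw [hbdef]; linarith
  have hbc : b < c := by rw [hbdef]; linarith
  set U : Set ℝ := {α : ℝ | ∃ y, f y ≤ b ∧ α * f y + (1 - α) * g y < b} with hUdef
  set V : Set ℝ := {α : ℝ | ∃ y, g y ≤ b ∧ α * f y + (1 - α) * g y < b} with hVdef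
  have hUopen : IsOpen U := by
    have : U = ⋃ y ∈ {y : N | f y ≤ b}, {α : ℝ | α * f y + (1 - α) * g y < b} := by
      ext α; simp [hUdef]
    rw [this]
    refine isOpen_biUnion fun y _ => ?_
    exact isOpen_lt (by fun_prop) continuous_const
  have hVopen : IsOpen V := by
    have : V = ⋃ y ∈ {y : N | g y ≤ b}, {α : ℝ | α * f y + (1 - α) * g y < b} := by
      ext α; simp [hVdef]
    rw [this]
    refine isOpen_biUnion fun y _ => ?_
    exact isOpen_lt (by fun_prop) continuous_const
  have hcover : Icc (0:ℝ) 1 ⊆ U ∪ V := by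
    intro α hα
    obtain ⟨y, hy⟩ := hmix α hα b hβb
    by_cases hya : f y ≤ b
    · exact Or.inl ⟨y, hya, hy⟩
    · push_neg at hya
      have hyb : g y ≤ b := by
        by_contra hyb
        push_neg at hyb
        nlinarith [hα.1, hα.2]
      exact Or.inr ⟨y, hyb, hy⟩
  have hU1 : ((Icc (0:ℝ) 1) ∩ U).Nonempty := by
    obtain ⟨y, hy⟩ := hmix 1 (by norm_num) b hβb
    have hfy : f y < b := by linarith [hy]
    exact ⟨1, by norm_num, ⟨y, hfy.le, by linarith⟩⟩
  have hV0 : ((Icc (0:ℝ) 1) ∩ V).Nonempty := by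
    obtain ⟨y, hy⟩ := hmix 0 (by norm_num) b hβb
    have hgy : g y < b := by linarith [hy]
    exact ⟨0, by norm_num, ⟨y, hgy.le, by linarith⟩⟩
  obtain ⟨α, hαIcc, hαU, hαV⟩ :=
    (isPreconnected_Icc : IsPreconnected (Icc (0:ℝ) 1)) U V hUopen hVopen hcover hU1 hV0
  obtain ⟨yA, hpA, hA⟩ := hαU
  obtain ⟨yB, hsB, hB⟩ := hαV
  set p := f yA with hp
  set q := g yA with hq
  set r := f yB with hr
  set s := g yB with hs
  have hα0 : (0:ℝ) ≤ α := hαIcc.1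
  have hα1 : α ≤ 1 := hαIcc.2
  have hqc : c < q := hcon yA (by linarith)
  have hrc : c < r := by
    by_contra hrc
    push_neg at hrc
    exact absurd (hcon yB hrc) (by linarith)
  have hrp : (0:ℝ) < r - p := by linarith
  -- key algebraic inequality: (q - c) * (r - c) < (c - p) * (c - s)
  have hA' : q - b < α * (q - p) := by nlinarith [hA]
  have hB' : r - b < (1 - α) * (r - s) := by nlinarith [hB]
  have hkey : (q - c) * (r - c) < (c - p) * (c - s) := by
    have h1 := mul_lt_mul_of_pos_right hA' (show (0:ℝ) < r - s by linarith)
    have h2 := mul_lt_mul_of_pos_right hB' (show (0:ℝ) < q - p by linarith)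
    nlinarith [h1, h2]
  set lam : ℝ := (r - c) / (r - p) with hlamdef
  have hlam0 : 0 ≤ lam := div_nonneg (by linarith) (by linarith)
  have hlam1 : lam ≤ 1 := by
    rw [hlamdef, div_le_one hrp]; linarith
  have heq1 : lam * p + (1 - lam) * r = c := by
    rw [hlamdef]; field_simp; ring
  have heq2 : lam * q + (1 - lam) * s ≤ c := by
    have hid : lam * q + (1 - lam) * s - c = ((r - c) * (q - c) - (c - p) * (c - s)) / (r - p) := by
      rw [hlamdef]; field_simp; ring
    have hnum : (r - c) * (q - c) - (c - p) * (c - s) < 0 := by nlinarith [hkey]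
    have := div_neg_of_neg_of_pos hnum hrp
    linarith [hid ▸ this]
  obtain ⟨y, hyf, hyg⟩ := hcvx yA yB lam ⟨hlam0, hlam1⟩
  have hfc : f y ≤ c := by rw [← heq1]; exact hyf
  have hgc : g y ≤ c := le_trans hyg heq2
  exact absurd (hcon y hfc) (by linarith)

/-- The finite intersection lemma: for any finite list of points of `M` and any level `c`
above `sup inf`, there is a common point `y` where all values are at most `c`. -/
lemma key_lemma [Nonempty N] (h : M → N → ℝ)
    (hconc : ∀ x₁ x₂ : M, ∀ α : ℝ, α ∈ Set.Icc (0 : ℝ) 1 →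
      ∃ x : M, ∀ y : N, α * h x₁ y + (1 - α) * h x₂ y ≤ h x y)
    (hconv : ∀ y₁ y₂ : N, ∀ α : ℝ, α ∈ Set.Icc (0 : ℝ) 1 →
      ∃ y : N, ∀ x : M, h x y ≤ α * h x y₁ + (1 - α) * h x y₂) :
    ∀ (n : ℕ) (l : List M), l.length ≤ n → ∀ c : ℝ,
      (⨆ x : M, ⨅ y : N, (h x y : EReal)) < (c : EReal) → ∃ y, ∀ x ∈ l, h x y ≤ c := by
  intro n
  induction n with
  | zero =>
    intro l hl c _
    rw [Nat.le_zero, List.length_eq_zero_iff] at hl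
    subst hl
    exact ⟨Classical.arbitrary N, by simp⟩
  | succ n IH =>
    intro l hl c hc
    -- first, for any single x, find y with h x y < c
    have hsingle : ∀ (x : M) (b : ℝ), (⨆ x : M, ⨅ y : N, (h x y : EReal)) < (b : EReal) →
        ∃ y, h x y < b := by
      intro x b hb
      have : (⨅ y : N, (h x y : EReal)) < (b : EReal) :=
        lt_of_le_of_lt (le_iSup (fun x => ⨅ y : N, (h x y : EReal)) x) hb
      rw [iInf_lt_iff] at this
      obtain ⟨y, hy⟩ := this
      exact ⟨y, by exact_mod_cast hy⟩
    match l with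
    | [] => exact ⟨Classical.arbitrary N, by simp⟩
    | [x₀] =>
      obtain ⟨y, hy⟩ := hsingle x₀ c hc
      exact ⟨y, by simpa using hy.le⟩
    | x₀ :: x₁ :: l' =>
      -- β₀ : a real level strictly between sup-inf and c
      obtain ⟨β₀, hβ₀1, hβ₀2⟩ := EReal.exists_between_coe_real hc
      have hβ₀c : β₀ < c := by exact_mod_cast hβ₀2
      set f : N → ℝ := fun y => lmaxAux h l' x₁ y with hfdef
      set g : N → ℝ := fun y => h x₀ y with hgdef
      have hmix : ∀ α ∈ Set.Icc (0:ℝ) 1, ∀ b : ℝ, β₀ < b → ∃ y, α * f y + (1 - α) * g y < b := by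
        intro α hα b hb
        -- merged points
        set m : M → M := fun x => Classical.choose (hconc x x₀ α hα) with hmdef
        have hm : ∀ x : M, ∀ y : N, α * h x y + (1 - α) * h x₀ y ≤ h (m x) y :=
          fun x => Classical.choose_spec (hconc x x₀ α hα)
        set b' : ℝ := (β₀ + b) / 2 with hb'def
        have hb'1 : (⨆ x : M, ⨅ y : N, (h x y : EReal)) < (b' : EReal) :=
          lt_trans hβ₀1 (by exact_mod_cast (show β₀ < b' by rw [hb'def]; linarith))
        have hb'2 : b' < b := by rw [hb'def]; linarith
        obtain ⟨y, hy⟩ := IH ((x₁ :: l').map m) (by simp only [List.length_map]; simpa using Nat.le_of_succ_le_succ hl) b' hb'1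
        refine ⟨y, ?_⟩
        obtain ⟨xm, hxmem, hxeq⟩ := lmaxAux_attained h l' x₁ y
        have h1 : α * h xm y + (1 - α) * h x₀ y ≤ h (m xm) y := hm xm y
        have h2 : h (m xm) y ≤ b' := hy (m xm) (List.mem_map_of_mem (f := m) hxmem)
        have : α * f y + (1 - α) * g y = α * h xm y + (1 - α) * h x₀ y := by
          rw [hfdef, hgdef]; simp [hxeq]
        rw [this]
        linarith
      have hcvx : ∀ y₁ y₂ : N, ∀ lam ∈ Set.Icc (0:ℝ) 1, ∃ y,
          f y ≤ lam * f y₁ + (1 - lam) * f y₂ ∧ g y ≤ lam * g y₁ + (1 - lam) * g y₂ := by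
        intro y₁ y₂ lam hlam
        obtain ⟨y, hy⟩ := hconv y₁ y₂ lam hlam
        refine ⟨y, ?_, hy x₀⟩
        obtain ⟨xm, hxmem, hxeq⟩ := lmaxAux_attained h l' x₁ y
        have : f y = h xm y := hxeq
        rw [this]
        calc h xm y ≤ lam * h xm y₁ + (1 - lam) * h xm y₂ := hy xm
          _ ≤ lam * f y₁ + (1 - lam) * f y₂ := by
              have h1 : h xm y₁ ≤ f y₁ := le_lmaxAux h l' x₁ y₁ xm hxmem
              have h2 : h xm y₂ ≤ f y₂ := le_lmaxAux h l' x₁ y₂ xm hxmem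
              have := hlam.1; have := hlam.2
              nlinarith
      obtain ⟨y, hfy, hgy⟩ := pair_lemma f g β₀ c hβ₀c hmix hcvx
      refine ⟨y, ?_⟩
      intro x hx
      rcases List.mem_cons.1 hx with rfl | hx
      · exact hgy
      · exact le_trans (le_lmaxAux h l' x₁ y x hx) hfy

end Aux

/-- General minimax theorem of Kneser, Fan, Sion: if `M` is a nonempty set, `N` a nonempty
compact topological space, `h : M × N → ℝ` is concave-convexlike and lower semicontinuous
in the second variable, then `sup_x inf_y h x y = inf_y sup_x h x y` in the extended reals,
and the infimum on the right-hand side is attained. -/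
theorem minimax_kneser_fan_sion {M : Type*} {N : Type*} [Nonempty M]
    [TopologicalSpace N] [CompactSpace N] [Nonempty N]
    (h : M → N → ℝ)
    (hconc : ∀ x₁ x₂ : M, ∀ α : ℝ, α ∈ Set.Icc (0 : ℝ) 1 →
      ∃ x : M, ∀ y : N, α * h x₁ y + (1 - α) * h x₂ y ≤ h x y)
    (hconv : ∀ y₁ y₂ : N, ∀ α : ℝ, α ∈ Set.Icc (0 : ℝ) 1 →
      ∃ y : N, ∀ x : M, h x y ≤ α * h x y₁ + (1 - α) * h x y₂)
    (hlsc : ∀ x : M, LowerSemicontinuous fun y : N => h x y) :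
    (⨆ x : M, ⨅ y : N, (h x y : EReal)) = (⨅ y : N, ⨆ x : M, (h x y : EReal)) ∧
    ∃ y' : N, (⨆ x : M, (h x y' : EReal)) = ⨅ y : N, ⨆ x : M, (h x y : EReal) := by
  set φ : N → EReal := fun y => ⨆ x : M, (h x y : EReal) with hφdef
  have hφlsc : LowerSemicontinuous φ :=
    lowerSemicontinuous_iSup fun x =>
      continuous_coe_real_ereal.comp_lowerSemicontinuous (hlsc x)
        (fun a b hab => EReal.coe_le_coe_iff.2 hab)
  -- attainment of the infimum of φ by compactness
  have hattain : ∃ y' : N, ∀ y : N, φ y' ≤ φ y := by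
    by_contra hcon
    push_neg at hcon
    have hne : (univ ∩ ⋂ y₀ : N, {y : N | φ y ≤ φ y₀}) = ∅ := by
      by_contra hne
      obtain ⟨y', hy'⟩ := Set.nonempty_iff_ne_empty.2 hne
      obtain ⟨y₀, hy₀⟩ := hcon y'
      have := (Set.mem_iInter.1 hy'.2) y₀
      exact absurd this (not_le.2 hy₀)
    obtain ⟨t, ht⟩ := isCompact_univ.elim_finite_subfamily_closed
      (fun y₀ : N => {y : N | φ y ≤ φ y₀}) (fun y₀ => hφlsc.isClosed_preimage (φ y₀)) hne
    rcases t.eq_empty_or_nonempty with rfl | htne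
    · simp at ht
    · obtain ⟨y₀, hy₀t, hy₀min⟩ := t.exists_min_image φ htne
      have : y₀ ∈ univ ∩ ⋂ y₁ ∈ t, {y : N | φ y ≤ φ y₁} := by
        refine ⟨trivial, Set.mem_iInter₂.2 fun y₁ hy₁ => hy₀min y₁ hy₁⟩
      rw [ht] at this
      exact this
  obtain ⟨y', hy'⟩ := hattain
  -- the minimax equality
  have hle : (⨆ x : M, ⨅ y : N, (h x y : EReal)) ≤ ⨅ y : N, φ y :=
    iSup_iInf_le_iInf_iSup fun x y => (h x y : EReal)
  have hge : (⨅ y : N, φ y) ≤ ⨆ x : M, ⨅ y : N, (h x y : EReal) := by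
    by_contra hlt
    push_neg at hlt
    obtain ⟨c, hc1, hc2⟩ := EReal.exists_between_coe_real hlt
    -- finite intersection property for the sublevel sets
    have hfip : ∀ t : Finset M, (univ ∩ ⋂ x ∈ t, {y : N | h x y ≤ c}).Nonempty := by
      intro t
      obtain ⟨y, hy⟩ := key_lemma h hconc hconv t.toList.length t.toList le_rfl c hc1
      exact ⟨y, trivial, Set.mem_iInter₂.2 fun x hx => hy x (Finset.mem_toList.2 hx)⟩
    have hne : (univ ∩ ⋂ x : M, {y : N | h x y ≤ c}).Nonempty := by
      by_contra hne
      rw [Set.not_nonempty_iff_eq_empty] at hne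
      obtain ⟨t, ht⟩ := isCompact_univ.elim_finite_subfamily_closed
        (fun x : M => {y : N | h x y ≤ c})
        (fun x => (hlsc x).isClosed_preimage c) hne
      obtain ⟨y, _, hy⟩ := hfip t
      have hmem : y ∈ univ ∩ ⋂ x ∈ t, {y : N | h x y ≤ c} := ⟨trivial, hy⟩
      rw [ht] at hmem
      exact hmem
    obtain ⟨y, _, hy⟩ := hne
    have hφy : φ y ≤ (c : EReal) := by
      rw [hφdef]
      exact iSup_le fun x => EReal.coe_le_coe_iff.2 (Set.mem_iInter.1 hy x)
    have : (⨅ y : N, φ y) ≤ (c : EReal) := le_trans (iInf_le _ y) hφy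
    exact absurd (lt_of_le_of_lt this hc2) (lt_irrefl _)
  have heq : (⨆ x : M, ⨅ y : N, (h x y : EReal)) = ⨅ y : N, φ y := le_antisymm hle hge
  exact ⟨heq, y', le_antisymm (le_iInf hy') (iInf_le _ y')⟩
end

section
/- Define c : [0,1] → ℝ by c(μ) := min{10μ, 10(1−μ)}, and define the operator T on functions f : [0,1] → ℝ by (T f)(μ) := min{ c(μ), 1 + ((1/3)μ + (2/3)(1−μ))·f(μ/(2−μ)) + ((2/3)μ + (1/3)(1−μ))·f(2μ/(1+μ)) }. Then (T c)(μ) = 10μ for 0 ≤ μ ≤ 13/30, (T c)(μ) = 13/3 for 13/30 < μ ≤ 17/30, and (T c)(μ) = 10(1−μ) for 17/30 < μ ≤ 1; i.e. T c = C₁ where C₁ : [0,1] → ℝ is the function defined piecewise by these three formulas. -/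
set_option maxHeartbeats 1000000


/-- Terminal cost in the Bernoulli hypothesis-testing example: `c(μ) = min{10μ, 10(1−μ)}`. -/
noncomputable def cCost (μ : ℝ) : ℝ := min (10 * μ) (10 * (1 - μ))

/-- One-step value iteration operator of the Bernoulli hypothesis-testing example:
either stop (cost `c(μ)`) or pay `1` for one more observation and update the belief to
`μ/(2−μ)` (success) or `2μ/(1+μ)` (failure). -/
noncomputable def Topt (f : ℝ → ℝ) (μ : ℝ) : ℝ :=
  min (cCost μ)
    (1 + ((1 / 3) * μ + (2 / 3) * (1 - μ)) * f (μ / (2 - μ)) +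
      ((2 / 3) * μ + (1 / 3) * (1 - μ)) * f (2 * μ / (1 + μ)))

/-- The one-step value function `C₁` of the example. -/
noncomputable def C₁ (μ : ℝ) : ℝ :=
  if μ ≤ 13 / 30 then 10 * μ else if μ ≤ 17 / 30 then 13 / 3 else 10 * (1 - μ)

lemma Topt_key (μ : ℝ) (h0 : 0 ≤ μ) (h1 : μ ≤ 1) :
    Topt cCost μ = min (min (10 * μ) (10 * (1 - μ)))
      (1 + min (10 * μ / 3) (20 * (1 - μ) / 3) + min (20 * μ / 3) (10 * (1 - μ) / 3)) := by
  have h2 : (2 - μ) ≠ 0 := by intro h; nlinarith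
  have h3 : (1 + μ) ≠ 0 := by intro h; nlinarith
  have e1 : ((1 / 3) * μ + (2 / 3) * (1 - μ)) * cCost (μ / (2 - μ)) =
      min (10 * μ / 3) (20 * (1 - μ) / 3) := by
    unfold cCost
    rw [mul_min_of_nonneg _ _ (by linarith : (0:ℝ) ≤ (1 / 3) * μ + (2 / 3) * (1 - μ))]
    congr 1 <;> field_simp <;> ring
  have e2 : ((2 / 3) * μ + (1 / 3) * (1 - μ)) * cCost (2 * μ / (1 + μ)) =
      min (20 * μ / 3) (10 * (1 - μ) / 3) := by
    unfold cCost
    rw [mul_min_of_nonneg _ _ (by linarith : (0:ℝ) ≤ (2 / 3) * μ + (1 / 3) * (1 - μ))]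
    congr 1 <;> field_simp <;> ring
  unfold Topt
  rw [e1, e2]; rfl

/-- One step of value iteration applied to the terminal cost yields `C₁`:
`(T c)(μ) = 10μ` on `[0, 13/30]`, `(T c)(μ) = 13/3` on `(13/30, 17/30]`, and
`(T c)(μ) = 10(1−μ)` on `(17/30, 1]`. -/
theorem Topt_cCost_eq_C₁ :
    (∀ μ : ℝ, 0 ≤ μ → μ ≤ 13 / 30 → Topt cCost μ = 10 * μ) ∧
    (∀ μ : ℝ, 13 / 30 < μ → μ ≤ 17 / 30 → Topt cCost μ = 13 / 3) ∧
    (∀ μ : ℝ, 17 / 30 < μ → μ ≤ 1 → Topt cCost μ = 10 * (1 - μ)) ∧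
    (∀ μ ∈ Set.Icc (0 : ℝ) 1, Topt cCost μ = C₁ μ) := by
  have A : ∀ μ : ℝ, 0 ≤ μ → μ ≤ 13 / 30 → Topt cCost μ = 10 * μ := by
    intro μ ha hb
    rw [Topt_key μ ha (by linarith)]
    simp only [min_def]; split_ifs <;> linarith
  have B : ∀ μ : ℝ, 13 / 30 < μ → μ ≤ 17 / 30 → Topt cCost μ = 13 / 3 := by
    intro μ ha hb
    rw [Topt_key μ (by linarith) (by linarith)]
    simp only [min_def]; split_ifs <;> linarith
  have C : ∀ μ : ℝ, 17 / 30 < μ → μ ≤ 1 → Topt cCost μ = 10 * (1 - μ) := by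
    intro μ ha hb
    rw [Topt_key μ (by linarith) hb]
    simp only [min_def]; split_ifs <;> linarith
  refine ⟨A, B, C, ?_⟩
  intro μ hμ
  obtain ⟨h0, h1⟩ := hμ
  unfold C₁
  split_ifs with ha hb
  · exact A μ h0 ha
  · exact B μ (by linarith) hb
  · exact C μ (by linarith) h1
end

section
/- Define c : [0,1] → ℝ by c(μ) := min{10μ, 10(1−μ)}, the operator T on functions f : [0,1] → ℝ by (T f)(μ) := min{ c(μ), 1 + ((1/3)μ + (2/3)(1−μ))·f(μ/(2−μ)) + ((2/3)μ + (1/3)(1−μ))·f(2μ/(1+μ)) }, and C₁ : [0,1] → ℝ by C₁(μ) = 10μ for 0 ≤ μ ≤ 13/30, C₁(μ) = 13/3 for 13/30 < μ ≤ 17/30, and C₁(μ) = 10(1−μ) for 17/30 < μ ≤ 1. Then T C₁ = C₁, and consequently the value iteration Cₙ defined by C₀ := c and Cₙ := T Cₙ₋₁ satisfies Cₙ = C₁ for all n ≥ 1. -/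
/-- The value iteration `C₀ = c`, `Cₙ = T Cₙ₋₁` of the example. -/
noncomputable def Cseq : ℕ → ℝ → ℝ
  | 0 => cCost
  | n + 1 => Topt (Cseq n)

lemma cCost_left {x : ℝ} (h : x ≤ 1/2) : cCost x = 10 * x := by
  unfold cCost; rw [min_eq_left]; linarith

lemma cCost_right {x : ℝ} (h : 1/2 ≤ x) : cCost x = 10 * (1 - x) := by
  unfold cCost; rw [min_eq_right]; linarith

lemma C₁_left {x : ℝ} (h : x ≤ 13/30) : C₁ x = 10 * x := by
  unfold C₁; rw [if_pos h]

lemma C₁_mid {x : ℝ} (h1 : 13/30 < x) (h2 : x ≤ 17/30) : C₁ x = 13/3 := by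
  unfold C₁; rw [if_neg (not_le.2 h1), if_pos h2]

lemma C₁_right {x : ℝ} (h : 17/30 < x) : C₁ x = 10 * (1 - x) := by
  unfold C₁; rw [if_neg (by linarith), if_neg (by linarith)]

set_option maxHeartbeats 1000000 in
lemma Topt_C₁_fix {μ : ℝ} (h0 : 0 ≤ μ) (h1 : μ ≤ 1) : Topt C₁ μ = C₁ μ := by
  have hd2 : (0:ℝ) < 2 - μ := by linarith
  have hd1 : (0:ℝ) < 1 + μ := by linarith
  unfold Topt
  rcases le_or_gt μ (13/47) with hA | hA
  · rw [C₁_left (show μ/(2-μ) ≤ 13/30 by rw [div_le_iff₀ hd2]; linarith),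
        C₁_left (show 2*μ/(1+μ) ≤ 13/30 by rw [div_le_iff₀ hd1]; linarith),
        C₁_left (show μ ≤ 13/30 by linarith),
        cCost_left (by linarith)]
    have e : 1 + ((1/3)*μ + (2/3)*(1-μ)) * (10 * (μ/(2-μ))) +
        ((2/3)*μ + (1/3)*(1-μ)) * (10 * (2*μ/(1+μ))) = 1 + 10*μ := by
      field_simp; ring
    rw [e, min_eq_left (by linarith)]
  rcases le_or_gt μ (17/43) with hB | hB
  · rw [C₁_left (show μ/(2-μ) ≤ 13/30 by rw [div_le_iff₀ hd2]; linarith),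
        C₁_mid (show 13/30 < 2*μ/(1+μ) by rw [lt_div_iff₀ hd1]; linarith)
          (show 2*μ/(1+μ) ≤ 17/30 by rw [div_le_iff₀ hd1]; linarith),
        C₁_left (show μ ≤ 13/30 by linarith),
        cCost_left (by linarith)]
    have e : 1 + ((1/3)*μ + (2/3)*(1-μ)) * (10 * (μ/(2-μ))) +
        ((2/3)*μ + (1/3)*(1-μ)) * (13/3) = (22 + 43*μ)/9 := by
      field_simp; ring
    rw [e, min_eq_left (by linarith)]
  rcases le_or_gt μ (13/30) with hC | hC
  · rw [C₁_left (show μ/(2-μ) ≤ 13/30 by rw [div_le_iff₀ hd2]; linarith),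
        C₁_right (show 17/30 < 2*μ/(1+μ) by rw [lt_div_iff₀ hd1]; linarith),
        C₁_left hC, cCost_left (by linarith)]
    have e : 1 + ((1/3)*μ + (2/3)*(1-μ)) * (10 * (μ/(2-μ))) +
        ((2/3)*μ + (1/3)*(1-μ)) * (10 * (1 - 2*μ/(1+μ))) = 13/3 := by
      field_simp; ring
    rw [e, min_eq_left (by linarith)]
  rcases le_or_gt μ (17/30) with hD | hD
  · rw [C₁_left (show μ/(2-μ) ≤ 13/30 by rw [div_le_iff₀ hd2]; linarith),
        C₁_right (show 17/30 < 2*μ/(1+μ) by rw [lt_div_iff₀ hd1]; linarith),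
        C₁_mid hC hD]
    have e : 1 + ((1/3)*μ + (2/3)*(1-μ)) * (10 * (μ/(2-μ))) +
        ((2/3)*μ + (1/3)*(1-μ)) * (10 * (1 - 2*μ/(1+μ))) = 13/3 := by
      field_simp; ring
    rw [e]
    unfold cCost
    rw [min_eq_right (le_min (by linarith) (by linarith))]
  rcases le_or_gt μ (26/43) with hE | hE
  · rw [C₁_left (show μ/(2-μ) ≤ 13/30 by rw [div_le_iff₀ hd2]; linarith),
        C₁_right (show 17/30 < 2*μ/(1+μ) by rw [lt_div_iff₀ hd1]; linarith),
        C₁_right hD, cCost_right (by linarith)]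
    have e : 1 + ((1/3)*μ + (2/3)*(1-μ)) * (10 * (μ/(2-μ))) +
        ((2/3)*μ + (1/3)*(1-μ)) * (10 * (1 - 2*μ/(1+μ))) = 13/3 := by
      field_simp; ring
    rw [e, min_eq_left (by linarith)]
  rcases le_or_gt μ (34/47) with hF | hF
  · rw [C₁_mid (show 13/30 < μ/(2-μ) by rw [lt_div_iff₀ hd2]; linarith)
          (show μ/(2-μ) ≤ 17/30 by rw [div_le_iff₀ hd2]; linarith),
        C₁_right (show 17/30 < 2*μ/(1+μ) by rw [lt_div_iff₀ hd1]; linarith),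
        C₁_right hD, cCost_right (by linarith)]
    have e : 1 + ((1/3)*μ + (2/3)*(1-μ)) * (13/3) +
        ((2/3)*μ + (1/3)*(1-μ)) * (10 * (1 - 2*μ/(1+μ))) = (65 - 43*μ)/9 := by
      field_simp; ring
    rw [e, min_eq_left (by linarith)]
  · rw [C₁_right (show 17/30 < μ/(2-μ) by rw [lt_div_iff₀ hd2]; linarith),
        C₁_right (show 17/30 < 2*μ/(1+μ) by rw [lt_div_iff₀ hd1]; linarith),
        C₁_right hD, cCost_right (by linarith)]
    have e : 1 + ((1/3)*μ + (2/3)*(1-μ)) * (10 * (1 - μ/(2-μ))) +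
        ((2/3)*μ + (1/3)*(1-μ)) * (10 * (1 - 2*μ/(1+μ))) = 1 + 10*(1-μ) := by
      field_simp; ring
    rw [e, min_eq_left (by linarith)]

lemma Topt_cCost_eq {μ : ℝ} (h0 : 0 ≤ μ) (h1 : μ ≤ 1) : Topt cCost μ = C₁ μ := by
  have hd2 : (0:ℝ) < 2 - μ := by linarith
  have hd1 : (0:ℝ) < 1 + μ := by linarith
  unfold Topt
  rcases le_or_gt μ (1/3) with hA | hA
  · rw [cCost_left (show μ/(2-μ) ≤ 1/2 by rw [div_le_iff₀ hd2]; linarith),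
        cCost_left (show 2*μ/(1+μ) ≤ 1/2 by rw [div_le_iff₀ hd1]; linarith),
        cCost_left (by linarith), C₁_left (by linarith)]
    have e : 1 + ((1/3)*μ + (2/3)*(1-μ)) * (10 * (μ/(2-μ))) +
        ((2/3)*μ + (1/3)*(1-μ)) * (10 * (2*μ/(1+μ))) = 1 + 10*μ := by
      field_simp; ring
    rw [e, min_eq_left (by linarith)]
  rcases le_or_gt μ (2/3) with hB | hB
  · rw [cCost_left (show μ/(2-μ) ≤ 1/2 by rw [div_le_iff₀ hd2]; linarith),
        cCost_right (show 1/2 ≤ 2*μ/(1+μ) by rw [le_div_iff₀ hd1]; linarith)]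
    have e : 1 + ((1/3)*μ + (2/3)*(1-μ)) * (10 * (μ/(2-μ))) +
        ((2/3)*μ + (1/3)*(1-μ)) * (10 * (1 - 2*μ/(1+μ))) = 13/3 := by
      field_simp; ring
    rw [e]
    rcases le_or_gt μ (13/30) with hC | hC
    · rw [C₁_left hC, cCost_left (by linarith), min_eq_left (by linarith)]
    rcases le_or_gt μ (17/30) with hD | hD
    · rw [C₁_mid hC hD]
      unfold cCost
      rw [min_eq_right (le_min (by linarith) (by linarith))]
    · rw [C₁_right hD, cCost_right (by linarith), min_eq_left (by linarith)]
  · rw [cCost_right (show 1/2 ≤ μ/(2-μ) by rw [le_div_iff₀ hd2]; linarith),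
        cCost_right (show 1/2 ≤ 2*μ/(1+μ) by rw [le_div_iff₀ hd1]; linarith),
        cCost_right (by linarith), C₁_right (by linarith)]
    have e : 1 + ((1/3)*μ + (2/3)*(1-μ)) * (10 * (1 - μ/(2-μ))) +
        ((2/3)*μ + (1/3)*(1-μ)) * (10 * (1 - 2*μ/(1+μ))) = 1 + 10*(1-μ) := by
      field_simp; ring
    rw [e, min_eq_left (by linarith)]

/-- `C₁` is a fixed point of the value iteration operator on `[0,1]`, and consequently the
value iteration is stationary from stage `1` on: `Cₙ = C₁` on `[0,1]` for all `n ≥ 1`. -/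
theorem Topt_C₁_eq_C₁_and_stationary :
    (∀ μ ∈ Set.Icc (0 : ℝ) 1, Topt C₁ μ = C₁ μ) ∧
    (∀ n : ℕ, 1 ≤ n → ∀ μ ∈ Set.Icc (0 : ℝ) 1, Cseq n μ = C₁ μ) := by
  constructor
  · rintro μ ⟨h0, h1⟩
    exact Topt_C₁_fix h0 h1
  · intro n hn
    induction n with
    | zero => omega
    | succ m ih =>
      rintro μ ⟨h0, h1⟩
      have hd2 : (0:ℝ) < 2 - μ := by linarith
      have hd1 : (0:ℝ) < 1 + μ := by linarith
      rcases Nat.eq_zero_or_pos m with rfl | hm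
      · exact Topt_cCost_eq h0 h1
      · have ha0 : 0 ≤ μ/(2-μ) := div_nonneg h0 hd2.le
        have ha1 : μ/(2-μ) ≤ 1 := by rw [div_le_one hd2]; linarith
        have hb0 : 0 ≤ 2*μ/(1+μ) := div_nonneg (by linarith) hd1.le
        have hb1 : 2*μ/(1+μ) ≤ 1 := by rw [div_le_one hd1]; linarith
        show Topt (Cseq m) μ = C₁ μ
        unfold Topt
        rw [ih hm _ ⟨ha0, ha1⟩, ih hm _ ⟨hb0, hb1⟩]
        have h := Topt_C₁_fix h0 h1
        unfold Topt at h
        exact h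
end
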